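/- Any n-uniform clique H = (V,E) with chromatic number 3 has at most n^n edges. -/

import Mathlib

noncomputable def pickV {V : Type*} (v0 : V) (s : Finset V) : V :=
  if h : s.Nonempty then h.choose else v0

lemma pickV_mem {V : Type*} {v0 : V} {s : Finset V} (h : s.Nonempty) :
    pickV v0 s ∈ s := by
  rw [pickV, dif_pos h]; exact h.choose_spec

noncomputable def chainT {V : Type*} [DecidableEq V] (v0 : V)
    (g : Finset V → Finset V) (f : Finset V) : ℕ → Finset V
  | 0 => ∅
  | i + 1 => insert (pickV v0 (g (chainT v0 g f i) ∩ f)) (chainT v0 g f i)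

theorem erdos_lovasz_upper_bound {V : Type*} [DecidableEq V] (n : ℕ)
    (E : Finset (Finset V))
    (huniform : ∀ e ∈ E, e.card = n)
    (hclique : ∀ e ∈ E, ∀ f ∈ E, (e ∩ f).Nonempty)
    (hno2 : ¬ ∃ c : V → Fin 2, ∀ e ∈ E, ∃ u ∈ e, ∃ v ∈ e, c u ≠ c v)
    (hyes3 : ∃ c : V → Fin 3, ∀ e ∈ E, ∃ u ∈ e, ∃ v ∈ e, c u ≠ c v) :
    E.card ≤ n ^ n := by
  classical
  obtain ⟨c3, hc3⟩ := hyes3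
  -- every 2-coloring has a monochromatic edge
  have hmono : ∀ c : V → Fin 2, ∃ e ∈ E, ∀ u ∈ e, ∀ v ∈ e, c u = c v := by
    intro c
    by_contra h
    push_neg at h
    exact hno2 ⟨c, h⟩
  obtain ⟨e0, he0E, _⟩ := hmono (fun _ => 0)
  obtain ⟨u, hu, w, hw, huw⟩ := hc3 e0 he0E
  have hne_uw : u ≠ w := fun h => huw (by rw [h])
  have hn2 : 2 ≤ n := by
    have hsub : ({u, w} : Finset V) ⊆ e0 := by
      intro x hx
      simp only [Finset.mem_insert, Finset.mem_singleton] at hx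
      rcases hx with rfl | rfl <;> assumption
    have := Finset.card_le_card hsub
    rwa [huniform e0 he0E, Finset.card_insert_of_notMem (by simpa), Finset.card_singleton] at this
  -- key: any set of fewer than n vertices misses some edge
  have key : ∀ T : Finset V, T.card < n → ∃ e, e ∈ E ∧ e ∩ T = ∅ := by
    intro T hT
    obtain ⟨e, heE, he⟩ := hmono (fun v => if v ∈ T then 0 else 1)
    refine ⟨e, heE, ?_⟩
    by_contra hd
    obtain ⟨x, hx⟩ := Finset.nonempty_iff_ne_empty.mpr hd
    rw [Finset.mem_inter] at hx
    have hesub : e ⊆ T := by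
      intro y hy
      have := he y hy x hx.1
      simp only [hx.2, if_true] at this
      by_contra hyT
      simp [hyT] at this
    have := Finset.card_le_card hesub
    rw [huniform e heE] at this
    omega
  obtain ⟨g, hg⟩ : ∃ g : Finset V → Finset V,
      ∀ T, T.card < n → g T ∈ E ∧ g T ∩ T = ∅ := by
    refine ⟨fun T => if h : T.card < n then (key T h).choose else ∅, fun T h => ?_⟩
    simpa only [dif_pos h] using (key T h).choose_spec
  -- invariants along the chain
  have inv : ∀ f ∈ E, ∀ i, i ≤ n →
      (chainT u g f i).card = i ∧ chainT u g f i ⊆ f := by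
    intro f hf i
    induction i with
    | zero => intro _; simp [chainT]
    | succ i ih =>
      intro hi
      obtain ⟨hcard, hsub⟩ := ih (by omega)
      have hlt : (chainT u g f i).card < n := by omega
      have hgE := (hg _ hlt).1
      have hgd := (hg _ hlt).2
      have hne : (g (chainT u g f i) ∩ f).Nonempty := hclique _ hgE f hf
      have hv := pickV_mem (v0 := u) hne
      rw [Finset.mem_inter] at hv
      have hnotmem : pickV u (g (chainT u g f i) ∩ f) ∉ chainT u g f i := by
        intro hmem
        have : pickV u (g (chainT u g f i) ∩ f) ∈ g (chainT u g f i) ∩ chainT u g f i :=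
          Finset.mem_inter.mpr ⟨hv.1, hmem⟩
        rw [hgd] at this
        exact absurd this (Finset.notMem_empty _)
      constructor
      · rw [chainT, Finset.card_insert_of_notMem hnotmem, hcard]
      · rw [chainT]
        exact Finset.insert_subset hv.2 hsub
  have final : ∀ f ∈ E, chainT u g f n = f := by
    intro f hf
    obtain ⟨hcard, hsub⟩ := inv f hf n le_rfl
    exact Finset.eq_of_subset_of_card_le hsub (by rw [hcard, huniform f hf])
  -- the encoding map
  set F : Finset V → (Fin n → ℕ) := fun f i =>
    (g (chainT u g f i)).toList.idxOf (pickV u (g (chainT u g f i) ∩ f)) with hF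
  have hmem : ∀ f ∈ E, ∀ i : Fin n,
      pickV u (g (chainT u g f i) ∩ f) ∈ (g (chainT u g f i)).toList ∧
      g (chainT u g f i) ∈ E := by
    intro f hf i
    have hcard := (inv f hf i (le_of_lt i.isLt)).1
    have hlt : (chainT u g f i).card < n := by rw [hcard]; exact i.isLt
    have hgE := (hg _ hlt).1
    have hne : (g (chainT u g f i) ∩ f).Nonempty := hclique _ hgE f hf
    have hv := pickV_mem (v0 := u) hne
    rw [Finset.mem_inter] at hv
    exact ⟨Finset.mem_toList.mpr hv.1, hgE⟩
  have hmaps : ∀ f ∈ E, F f ∈ Fintype.piFinset (fun _ : Fin n => Finset.range n) := by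
    intro f hf
    rw [Fintype.mem_piFinset]
    intro i
    rw [Finset.mem_range, hF]
    have h := hmem f hf i
    have := List.idxOf_lt_length_iff.mpr h.1
    rwa [Finset.length_toList, huniform _ h.2] at this
  have hinj : Set.InjOn F E := by
    intro f hf f' hf' hFF
    have chain_eq : ∀ i, i ≤ n → chainT u g f i = chainT u g f' i := by
      intro i
      induction i with
      | zero => intro _; rfl
      | succ i ih =>
        intro hi
        have hT := ih (by omega)
        have hilt : i < n := by omega
        have hidx : F f ⟨i, hilt⟩ = F f' ⟨i, hilt⟩ := by rw [hFF]
        rw [hF] at hidx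
        simp only at hidx
        rw [hT] at hidx
        have h1 := (hmem f hf ⟨i, hilt⟩).1
        have h2 := (hmem f' hf' ⟨i, hilt⟩).1
        rw [hT] at h1
        have hveq : pickV u (g (chainT u g f' i) ∩ f) = pickV u (g (chainT u g f' i) ∩ f') :=
          (List.idxOf_inj h1).mp hidx
        show insert _ _ = insert _ _
        rw [hT, hveq]
    calc f = chainT u g f n := (final f hf).symm
      _ = chainT u g f' n := chain_eq n le_rfl
      _ = f' := final f' hf'
  have := Finset.card_le_card_of_injOn F hmaps hinj
  calc E.card ≤ (Fintype.piFinset (fun _ : Fin n => Finset.range n)).card := this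
    _ = n ^ n := by simp [Fintype.card_piFinset]
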